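/- Let d ≥ 2 be an integer and set ε = tan(π/(4d)). Let 1 ≤ k ≤ d and let w_1, …, w_k ∈ ℂ each satisfy |w_j − 1| ≤ ε·|w_j + 1|. Then the product w_1 · w_2 ⋯ w_k is nonzero and has nonnegative real part. -/

import Mathlib

set_option maxHeartbeats 800000

lemma key_arg_bound (θ : ℝ) (hθ0 : 0 < θ) (hθ1 : θ < Real.pi / 4) (w : ℂ)
    (hw : ‖w - 1‖ ≤ Real.tan θ * ‖w + 1‖) :
    0 < w.re ∧ |Complex.arg w| ≤ 2 * θ := by
  have hpi := Real.pi_pos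
  have hc : 0 < Real.cos θ := Real.cos_pos_of_mem_Ioo ⟨by linarith, by linarith⟩
  have hs : 0 < Real.sin θ := Real.sin_pos_of_pos_of_lt_pi hθ0 (by linarith)
  have hsc : Real.sin θ < Real.cos θ := by
    rw [← Real.sin_pi_div_two_sub]
    exact Real.sin_lt_sin_of_lt_of_le_pi_div_two (by linarith) (by linarith) (by linarith)
  have hpyth : Real.sin θ ^ 2 + Real.cos θ ^ 2 = 1 := Real.sin_sq_add_cos_sq θ
  have htan : Real.tan θ = Real.sin θ / Real.cos θ := Real.tan_eq_sin_div_cos θ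
  -- multiply hypothesis by cos θ
  have hw' : ‖w - 1‖ * Real.cos θ ≤ Real.sin θ * ‖w + 1‖ := by
    have h := mul_le_mul_of_nonneg_right hw hc.le
    have e : Real.tan θ * ‖w + 1‖ * Real.cos θ
        = Real.sin θ * ‖w + 1‖ := by
      rw [htan]; field_simp
    rwa [e] at h
  -- square it
  have hsq2 : Real.cos θ ^ 2 * ((w.re - 1) ^ 2 + w.im ^ 2) ≤
      Real.sin θ ^ 2 * ((w.re + 1) ^ 2 + w.im ^ 2) := by
    have h1 : (‖w - 1‖ * Real.cos θ) ^ 2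
        ≤ (Real.sin θ * ‖w + 1‖) ^ 2 := by
      apply sq_le_sq' _ hw'
      have h2 : 0 ≤ ‖w - 1‖ * Real.cos θ := by positivity
      have h3 : 0 ≤ Real.sin θ * ‖w + 1‖ := by positivity
      linarith
    have e1 : ‖w - 1‖ ^ 2 = (w.re - 1) ^ 2 + w.im ^ 2 := by
      rw [Complex.sq_norm, Complex.normSq_apply]
      simp [Complex.sub_re, Complex.sub_im]
      ring
    have e2 : ‖w + 1‖ ^ 2 = (w.re + 1) ^ 2 + w.im ^ 2 := by
      rw [Complex.sq_norm, Complex.normSq_apply]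
      simp [Complex.add_re, Complex.add_im]
      ring
    nlinarith [h1, e1, e2]
  have hC : 0 < Real.cos θ ^ 2 - Real.sin θ ^ 2 := by nlinarith
  have key1 : (Real.cos θ ^ 2 - Real.sin θ ^ 2) * (w.re ^ 2 + w.im ^ 2 + 1) ≤ 2 * w.re := by
    nlinarith [hsq2, hpyth]
  have hxpos : 0 < w.re := by nlinarith [sq_nonneg w.re, sq_nonneg w.im]
  -- cos(2θ), sin(2θ)
  have hCval : Real.cos (2 * θ) = Real.cos θ ^ 2 - Real.sin θ ^ 2 := by
    rw [Real.cos_two_mul]; nlinarith [hpyth]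
  have hSval : Real.sin (2 * θ) = 2 * Real.sin θ * Real.cos θ := Real.sin_two_mul θ
  have hC0 : 0 < Real.cos (2 * θ) := by rw [hCval]; exact hC
  have hS0 : 0 < Real.sin (2 * θ) := by rw [hSval]; positivity
  have hpyth2 : Real.sin (2 * θ) ^ 2 + Real.cos (2 * θ) ^ 2 = 1 :=
    Real.sin_sq_add_cos_sq (2 * θ)
  have key1' : Real.cos (2 * θ) * (w.re ^ 2 + w.im ^ 2 + 1) ≤ 2 * w.re := by
    rw [hCval]; exact key1
  -- C² y² ≤ S² x²
  have key2 : Real.cos (2 * θ) ^ 2 * w.im ^ 2 ≤ Real.sin (2 * θ) ^ 2 * w.re ^ 2 := by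
    nlinarith [mul_le_mul_of_nonneg_left key1' hC0.le,
      sq_nonneg (w.re - Real.cos (2 * θ)), hpyth2, sq_nonneg w.re, sq_nonneg w.im]
  -- y² ≤ S² |w|²
  have habs : ‖w‖ ^ 2 = w.re ^ 2 + w.im ^ 2 := by
    rw [Complex.sq_norm, Complex.normSq_apply]; ring
  have hy2 : w.im ^ 2 ≤ Real.sin (2 * θ) ^ 2 * ‖w‖ ^ 2 := by
    rw [habs]
    have e : w.im ^ 2 = Real.sin (2 * θ) ^ 2 * w.im ^ 2 + Real.cos (2 * θ) ^ 2 * w.im ^ 2 := by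
      linear_combination (-(w.im ^ 2)) * hpyth2
    nlinarith [key2, e]
  have habspos : 0 < ‖w‖ := by
    apply norm_pos_iff.mpr
    intro h
    rw [h] at hxpos
    simp at hxpos
  have hyabs : |w.im| ≤ Real.sin (2 * θ) * ‖w‖ := by
    have h1 : Real.sqrt (w.im ^ 2) ≤ Real.sqrt (Real.sin (2 * θ) ^ 2 * ‖w‖ ^ 2) :=
      Real.sqrt_le_sqrt hy2
    rwa [Real.sqrt_sq_eq_abs, ← mul_pow, Real.sqrt_sq (by positivity)] at h1
  have hq : |w.im / ‖w‖| ≤ Real.sin (2 * θ) := by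
    rw [abs_div, abs_of_pos habspos, div_le_iff₀ habspos]
    exact hyabs
  have harg : Complex.arg w = Real.arcsin (w.im / ‖w‖) :=
    Complex.arg_of_re_nonneg hxpos.le
  have h2θ : 2 * θ ≤ Real.pi / 2 := by linarith
  have h2θ' : -(Real.pi / 2) ≤ 2 * θ := by linarith
  refine ⟨hxpos, ?_⟩
  rw [harg, abs_le]
  rw [abs_le] at hq
  constructor
  · have h := Real.monotone_arcsin hq.1
    rwa [Real.arcsin_neg, Real.arcsin_sin h2θ' h2θ] at h
  · have h := Real.monotone_arcsin hq.2
    rwa [Real.arcsin_sin h2θ' h2θ] at h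

/-- A product of `1 ≤ k ≤ d` complex numbers, each in the region
`R(tan(π/(4d))) = {w : |w − 1| ≤ tan(π/(4d))·|w + 1|}`, is nonzero and has
nonnegative real part. -/
theorem product_in_halfplane (d : ℕ) (hd : 2 ≤ d) (ε : ℝ)
    (hε : ε = Real.tan (Real.pi / (4 * (d : ℝ))))
    (k : ℕ) (hk1 : 1 ≤ k) (hkd : k ≤ d) (w : Fin k → ℂ)
    (hw : ∀ j, ‖w j - 1‖ ≤ ε * ‖w j + 1‖) :
    (∏ j, w j) ≠ 0 ∧ 0 ≤ (∏ j, w j).re := by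
  have hpi := Real.pi_pos
  have hd' : (2 : ℝ) ≤ (d : ℝ) := by exact_mod_cast hd
  have hθ0 : 0 < Real.pi / (4 * (d : ℝ)) := by positivity
  have hθ1 : Real.pi / (4 * (d : ℝ)) < Real.pi / 4 := by
    rw [div_lt_div_iff₀ (by positivity) (by norm_num)]
    nlinarith
  have hkey : ∀ j, 0 < (w j).re ∧ |Complex.arg (w j)| ≤ 2 * (Real.pi / (4 * (d : ℝ))) :=
    fun j => key_arg_bound _ hθ0 hθ1 (w j) (hε ▸ hw j)
  have hne : ∀ j, w j ≠ 0 := fun j => by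
    intro h
    have := (hkey j).1
    rw [h] at this; simp at this
  have hprodne : (∏ j, w j) ≠ 0 := Finset.prod_ne_zero_iff.2 fun j _ => hne j
  refine ⟨hprodne, ?_⟩
  have hpolar : ∀ j, w j = (‖w j‖ : ℂ) *
      Complex.exp ((Complex.arg (w j) : ℂ) * Complex.I) :=
    fun j => (Complex.norm_mul_exp_arg_mul_I (w j)).symm
  have hprod : (∏ j, w j) = ((∏ j, ‖w j‖ : ℝ) : ℂ) *
      Complex.exp (((∑ j, Complex.arg (w j) : ℝ) : ℂ) * Complex.I) := by
    rw [Finset.prod_congr rfl (fun j _ => hpolar j), Finset.prod_mul_distrib]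
    congr 1
    · push_cast; ring
    · rw [← Complex.exp_sum]
      congr 1
      push_cast
      rw [Finset.sum_mul]
  have hre : (∏ j, w j).re =
      (∏ j, ‖w j‖) * Real.cos (∑ j, Complex.arg (w j)) := by
    rw [hprod, Complex.exp_mul_I]
    simp only [Complex.mul_re, Complex.add_re, Complex.add_im, Complex.mul_im,
      Complex.ofReal_re, Complex.ofReal_im, Complex.I_re, Complex.I_im,
      Complex.cos_ofReal_re, Complex.cos_ofReal_im, Complex.sin_ofReal_re,
      Complex.sin_ofReal_im]
    ring
  rw [hre]
  apply mul_nonneg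
  · exact Finset.prod_nonneg fun j _ => norm_nonneg _
  · apply Real.cos_nonneg_of_mem_Icc
    have hsum : |∑ j, Complex.arg (w j)| ≤ Real.pi / 2 := by
      calc |∑ j, Complex.arg (w j)| ≤ ∑ j, |Complex.arg (w j)| :=
            Finset.abs_sum_le_sum_abs _ _
        _ ≤ ∑ _j : Fin k, 2 * (Real.pi / (4 * (d : ℝ))) :=
            Finset.sum_le_sum fun j _ => (hkey j).2
        _ = (k : ℝ) * (2 * (Real.pi / (4 * (d : ℝ)))) := by
            rw [Finset.sum_const, Finset.card_univ, Fintype.card_fin, nsmul_eq_mul]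
        _ ≤ (d : ℝ) * (2 * (Real.pi / (4 * (d : ℝ)))) := by
            apply mul_le_mul_of_nonneg_right _ (by positivity)
            exact_mod_cast hkd
        _ = Real.pi / 2 := by
            field_simp
            ring
    rw [abs_le] at hsum
    exact ⟨hsum.1, hsum.2⟩
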